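/- For every n ≥ 1: every down-up permutation σ = σ_1…σ_{2n+1} of length 2n+1 satisfies mmp^{(1,0,∅,0)}(σ) + χ(σ_1 = 2n+1) ≤ n+1, and the number of down-up permutations σ of length 2n+1 with mmp^{(1,0,∅,0)}(σ) + χ(σ_1 = 2n+1) = n+1 equals (2n)!!. (Equivalently, the highest power of x appearing in D̄^{(1,0,∅,0)}_{2n+1}(x) is x^{n+1}, with coefficient (2n)!!.) -/

import Mathlib

/-- A permutation `σ` of `{1,…,n}` (as a permutation of `Fin n`) is up-down if
`σ_1 < σ_2 > σ_3 < σ_4 > ⋯`. -/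
def UpDown {n : ℕ} (σ : Equiv.Perm (Fin n)) : Prop :=
  ∀ i : Fin n, ∀ h : i.val + 1 < n,
    if Even i.val then σ i < σ ⟨i.val + 1, h⟩ else σ ⟨i.val + 1, h⟩ < σ i

/-- A permutation is down-up if `σ_1 > σ_2 < σ_3 > σ_4 < ⋯`. -/
def DownUp {n : ℕ} (σ : Equiv.Perm (Fin n)) : Prop :=
  ∀ i : Fin n, ∀ h : i.val + 1 < n,
    if Even i.val then σ ⟨i.val + 1, h⟩ < σ i else σ i < σ ⟨i.val + 1, h⟩

/-- `σ_i` matches `MMP(1,0,∅,0)`: there exists `j > i` with `σ_j > σ_i` and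
there is no `j < i` with `σ_j < σ_i`. -/
def Matches1 {n : ℕ} (σ : Equiv.Perm (Fin n)) (i : Fin n) : Prop :=
  (∃ j, i < j ∧ σ i < σ j) ∧ ¬ ∃ j, j < i ∧ σ j < σ i

/-- `mmp^{(1,0,∅,0)}(σ)`: the number of indices matching `MMP(1,0,∅,0)` in `σ`. -/
noncomputable def mmp1 {n : ℕ} (σ : Equiv.Perm (Fin n)) : ℕ :=
  {i : Fin n | Matches1 σ i}.ncard

/-- The odd double factorial `(2n−1)!! = ∏_{i=1}^{n} (2i−1)`. -/
def oddDF (n : ℕ) : ℕ := ∏ i ∈ Finset.range n, (2*i+1)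

/-- The even double factorial `(2n)!! = ∏_{i=1}^{n} 2i`. -/
def evenDF (n : ℕ) : ℕ := ∏ i ∈ Finset.range n, (2*i+2)

/-- The statistic `mmp^{(1,0,∅,0)}(σ) + χ(σ_1 = 2n+1)` on permutations of length `2n+1`:
the indicator adds 1 when the first entry is the largest value `2n+1`
(i.e. `2*n` as an element of `Fin (2n+1)`). -/
noncomputable def dbarStat (n : ℕ) (σ : Equiv.Perm (Fin (2*n+1))) : ℕ :=
  mmp1 σ + if (σ ⟨0, by omega⟩).val = 2*n then 1 else 0

open Equiv Set

def LTRmin {n : ℕ} (σ : Equiv.Perm (Fin n)) (i : Fin n) : Prop :=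
  ∀ j, j < i → σ i < σ j

def Aset (n : ℕ) (σ : Equiv.Perm (Fin (2*n+1))) : Set (Fin (2*n+1)) :=
  {i | Odd i.val ∧ LTRmin σ i}

lemma matches_odd {n : ℕ} (σ : Equiv.Perm (Fin (2*n+1))) (hσ : DownUp σ)
    (i : Fin (2*n+1)) (hi : Odd i.val) : Matches1 σ i ↔ LTRmin σ i := by
  constructor
  · rintro ⟨_, h2⟩ j hj
    push_neg at h2
    have h3 := h2 j hj
    have hne : σ j ≠ σ i := fun h => (hj.ne (σ.injective h)).elim
    exact lt_of_le_of_ne h3 hne.symm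
  · intro hL
    have hodd : i.val % 2 = 1 := Nat.odd_iff.mp hi
    have hb := i.isLt
    have hlt : i.val + 1 < 2*n+1 := by omega
    have h1 := hσ i hlt
    rw [if_neg (by simp [Nat.even_iff]; omega)] at h1
    refine ⟨⟨⟨i.val+1, hlt⟩, ?_, h1⟩, ?_⟩
    · exact Fin.lt_def.mpr (by simp)
    · rintro ⟨j, hj, hjlt⟩
      exact absurd (hL j hj) (lt_asymm hjlt)

lemma matches_even {n : ℕ} (σ : Equiv.Perm (Fin (2*n+1))) (hσ : DownUp σ)
    (i : Fin (2*n+1)) (hi : Even i.val) (h0 : i.val ≠ 0) : ¬ Matches1 σ i := by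
  rintro ⟨_, h2⟩
  have he : i.val % 2 = 0 := Nat.even_iff.mp hi
  have hb := i.isLt
  have hj : (i.val - 1) + 1 < 2*n+1 := by omega
  have h1 := hσ ⟨i.val - 1, by omega⟩ hj
  rw [if_neg (by simp [Nat.even_iff]; omega)] at h1
  apply h2
  refine ⟨⟨i.val - 1, by omega⟩, Fin.mk_lt_of_lt_val (by omega), ?_⟩
  have : (⟨(i.val - 1) + 1, hj⟩ : Fin (2*n+1)) = i := by
    apply Fin.ext; simp; omega
  rwa [this] at h1

lemma matches_zero {n : ℕ} (σ : Equiv.Perm (Fin (2*n+1))) :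
    Matches1 σ ⟨0, by omega⟩ ↔ (σ ⟨0, by omega⟩).val ≠ 2*n := by
  constructor
  · rintro ⟨⟨j, _, hjlt⟩, _⟩ htop
    rw [Fin.lt_iff_val_lt_val] at hjlt
    have := (σ j).isLt
    omega
  · intro hne
    have hσj : σ (σ.symm ⟨2*n, by omega⟩) = ⟨2*n, by omega⟩ := Equiv.apply_symm_apply _ _
    have hj0 : (σ.symm ⟨2*n, by omega⟩).val ≠ 0 := by
      intro hh
      apply hne
      have h2 : σ.symm ⟨2*n, by omega⟩ = ⟨0, by omega⟩ := Fin.ext hh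
      rw [h2] at hσj
      rw [hσj]
    constructor
    · refine ⟨σ.symm ⟨2*n, by omega⟩, ?_, ?_⟩
      · exact Nat.pos_of_ne_zero hj0
      · rw [hσj]
        exact Fin.lt_def.mpr (lt_of_le_of_ne (Nat.lt_succ_iff.mp (σ ⟨0, by omega⟩).isLt) hne)
    · rintro ⟨j, hj, _⟩
      exact Nat.not_lt_zero _ hj

lemma dbar_eq {n : ℕ} (σ : Equiv.Perm (Fin (2*n+1))) (hσ : DownUp σ) :
    dbarStat n σ = 1 + (Aset n σ).ncard := by
  classical
  unfold dbarStat mmp1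
  by_cases h : (σ ⟨0, by omega⟩).val = 2*n
  · have hset : {i | Matches1 σ i} = Aset n σ := by
      ext i
      simp only [mem_setOf_eq, Aset]
      rcases Nat.even_or_odd i.val with he | ho
      · by_cases h0 : i.val = 0
        · have hi0 : i = ⟨0, by omega⟩ := Fin.ext h0
          rw [hi0]
          simp only [matches_zero σ, h0]
          constructor
          · intro hh; exact absurd h hh
          · rintro ⟨hodd, _⟩; exact absurd hodd (by simp [Nat.odd_iff, h0] at *)
        · constructor
          · intro hm; exact absurd hm (matches_even σ hσ i he h0)
          · rintro ⟨hodd, _⟩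
            exact absurd he (Nat.not_even_iff_odd.mpr hodd)
      · rw [matches_odd σ hσ i ho]
        exact ⟨fun hh => ⟨ho, hh⟩, fun hh => hh.2⟩
    rw [hset, if_pos h]; omega
  · have h0ne : (0:ℕ) ≠ 2*n → True := fun _ => trivial
    have hset : {i | Matches1 σ i} = insert ⟨0, by omega⟩ (Aset n σ) := by
      ext i
      simp only [mem_setOf_eq, Set.mem_insert_iff, Aset]
      rcases Nat.even_or_odd i.val with he | ho
      · by_cases h0 : i.val = 0
        · have hi0 : i = ⟨0, by omega⟩ := Fin.ext h0
          rw [hi0]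
          simp only [matches_zero σ]
          constructor
          · intro _; left; trivial
          · intro _; exact h
        · constructor
          · intro hm; exact absurd hm (matches_even σ hσ i he h0)
          · rintro (hh | ⟨hodd, _⟩)
            · exact absurd (congrArg Fin.val hh) h0
            · exact absurd he (Nat.not_even_iff_odd.mpr hodd)
      · rw [matches_odd σ hσ i ho]
        constructor
        · intro hh; right; exact ⟨ho, hh⟩
        · rintro (hh | hh)
          · exfalso
            have := congrArg Fin.val hh
            simp [Nat.odd_iff] at ho this
            rw [hh] at ho; simp [Nat.odd_iff] at ho
          · exact hh.2
    rw [hset, if_neg h]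
    rw [Set.ncard_insert_of_notMem ?_ (Set.toFinite _)]
    · omega
    · rintro ⟨hodd, _⟩
      simp [Nat.odd_iff] at hodd

lemma odd_ncard {n : ℕ} : ({i : Fin (2*n+1) | Odd i.val}).ncard = n := by
  classical
  have h1 : ({i : Fin (2*n+1) | Odd i.val}) =
      ↑((Finset.univ : Finset (Fin n)).image
        (fun k => (⟨2*k.val+1, by omega⟩ : Fin (2*n+1)))) := by
    ext i
    simp only [mem_setOf_eq, Finset.coe_image, Set.mem_image, Finset.mem_coe,
      Finset.coe_univ, Set.mem_univ, Nat.odd_iff]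
    constructor
    · intro hodd
      have hb := i.isLt
      refine ⟨⟨i.val/2, by omega⟩, by trivial, ?_⟩
      apply Fin.ext; simp; omega
    · rintro ⟨k, _, rfl⟩
      simp
  rw [h1, Set.ncard_coe_finset, Finset.card_image_of_injective _ ?_, Finset.card_univ,
    Fintype.card_fin]
  intro a b hab
  have := congrArg Fin.val hab
  simp at this
  exact Fin.ext (by omega)

lemma Aset_subset {n : ℕ} (σ : Equiv.Perm (Fin (2*n+1))) :
    Aset n σ ⊆ {i : Fin (2*n+1) | Odd i.val} := fun i hi => hi.1

lemma dbar_le {n : ℕ} (σ : Equiv.Perm (Fin (2*n+1))) (hσ : DownUp σ) :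
    dbarStat n σ ≤ n + 1 := by
  rw [dbar_eq σ hσ]
  have := Set.ncard_le_ncard (Aset_subset σ) (Set.toFinite _)
  rw [odd_ncard] at this
  omega

lemma dbar_eq_iff {n : ℕ} (σ : Equiv.Perm (Fin (2*n+1))) (hσ : DownUp σ) :
    dbarStat n σ = n + 1 ↔ ∀ i : Fin (2*n+1), Odd i.val → LTRmin σ i := by
  rw [dbar_eq σ hσ]
  constructor
  · intro hcard i hi
    have heq : Aset n σ = {i : Fin (2*n+1) | Odd i.val} := by
      apply Set.eq_of_subset_of_ncard_le (Aset_subset σ) _ (Set.toFinite _)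
      rw [odd_ncard]; omega
    have : i ∈ Aset n σ := heq ▸ hi
    exact this.2
  · intro hall
    have heq : Aset n σ = {i : Fin (2*n+1) | Odd i.val} := by
      apply Set.Subset.antisymm (Aset_subset σ)
      intro i hi; exact ⟨hi, hall i hi⟩
    rw [heq, odd_ncard]; omega

def Good (m : ℕ) : Set (Equiv.Perm (Fin (2*m+1))) :=
  {σ | DownUp σ ∧ ∀ i : Fin (2*m+1), Odd i.val → LTRmin σ i}

lemma good_zero : (Good 0).ncard = 1 := by
  have h : Good 0 = Set.univ := by
    ext σ
    simp only [Good, mem_setOf_eq, Set.mem_univ, iff_true]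
    constructor
    · intro i hh
      exact absurd hh (by omega)
    · intro i hi
      exfalso
      have := i.isLt
      rw [Nat.odd_iff] at hi
      omega
  rw [h, Set.ncard_univ, Nat.card_eq_fintype_card, Fintype.card_perm]
  simp

def vOf (m : ℕ) (d : Fin (2*m+2)) : Fin (2*m+3) := ⟨d.val+1, by omega⟩

def sOf (m : ℕ) (d : Fin (2*m+2)) : Finset (Fin (2*m+3)) :=
  Finset.univ \ {⟨0, by omega⟩, vOf m d}

lemma mem_sOf {m : ℕ} {d : Fin (2*m+2)} {x : Fin (2*m+3)} :
    x ∈ sOf m d ↔ x.val ≠ 0 ∧ x ≠ vOf m d := by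
  simp only [sOf, Finset.mem_sdiff, Finset.mem_univ, true_and, Finset.mem_insert,
    Finset.mem_singleton, not_or]
  constructor
  · rintro ⟨h1, h2⟩
    exact ⟨fun hh => h1 (Fin.ext hh), h2⟩
  · rintro ⟨h1, h2⟩
    exact ⟨fun hh => h1 (congrArg Fin.val hh), h2⟩

lemma card_sOf (m : ℕ) (d : Fin (2*m+2)) : (sOf m d).card = 2*m+1 := by
  have hne : (⟨0, by omega⟩ : Fin (2*m+3)) ≠ vOf m d := Fin.ne_of_val_ne (by simp only [vOf]; omega)
  rw [sOf, Finset.card_sdiff_of_subset (Finset.subset_univ _), Finset.card_univ, Fintype.card_fin,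
    Finset.card_pair hne]
  omega

noncomputable def eOf (m : ℕ) (d : Fin (2*m+2)) : Fin (2*m+1) ≃o (sOf m d) :=
  (sOf m d).orderIsoOfFin (card_sOf m d)

lemma eOf_lt_iff {m : ℕ} {d : Fin (2*m+2)} {a b : Fin (2*m+1)} :
    ((eOf m d a : Fin (2*m+3)) < (eOf m d b : Fin (2*m+3))) ↔ a < b := by
  rw [Subtype.coe_lt_coe]
  exact (eOf m d).lt_iff_lt

lemma eOf_val_pos {m : ℕ} (d : Fin (2*m+2)) (a : Fin (2*m+1)) :
    0 < (eOf m d a : Fin (2*m+3)).val := by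
  have := (mem_sOf.mp (eOf m d a).2).1
  omega

lemma eOf_ne_v {m : ℕ} (d : Fin (2*m+2)) (a : Fin (2*m+1)) :
    (eOf m d a : Fin (2*m+3)) ≠ vOf m d := (mem_sOf.mp (eOf m d a).2).2

noncomputable def PsiFun (m : ℕ) (τ : Equiv.Perm (Fin (2*m+1))) (d : Fin (2*m+2)) :
    Fin (2*m+3) → Fin (2*m+3) := fun i =>
  if h : i.val < 2*m+1 then (eOf m d (τ ⟨i.val, h⟩) : Fin (2*m+3))
  else if i.val = 2*m+1 then ⟨0, by omega⟩ else vOf m d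

lemma PsiFun_injective (m : ℕ) (τ : Equiv.Perm (Fin (2*m+1))) (d : Fin (2*m+2)) :
    Function.Injective (PsiFun m τ d) := by
  intro a b hab
  unfold PsiFun at hab
  have hApos := fun (x : Fin (2*m+1)) => eOf_val_pos d x
  have hAv := fun (x : Fin (2*m+1)) => eOf_ne_v d x
  split_ifs at hab with h1 h2 h3 h4 h5 h6 h7 h8
  all_goals (try (apply Fin.ext; omega))
  · apply Fin.ext
    have he1 := (eOf m d).injective (Subtype.coe_injective hab)
    have he2 := congrArg Fin.val (τ.injective he1)
    simpa using he2
  · have h := hApos (τ ⟨a.val, h1⟩)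
    rw [hab] at h
    exact absurd h (lt_irrefl 0)
  · exact absurd hab (hAv _)
  · have h := hApos (τ ⟨b.val, h5⟩)
    rw [← hab] at h
    exact absurd h (lt_irrefl 0)
  · exact absurd hab (Fin.ne_of_val_ne (by show (0:ℕ) ≠ d.val+1; omega))
  · exact absurd hab.symm (hAv _)
  · exact absurd hab (Fin.ne_of_val_ne (by show d.val+1 ≠ (0:ℕ); omega))

noncomputable def Psi (m : ℕ) (p : Equiv.Perm (Fin (2*m+1)) × Fin (2*m+2)) :
    Equiv.Perm (Fin (2*m+3)) :=
  Equiv.ofBijective _ (Finite.injective_iff_bijective.mp (PsiFun_injective m p.1 p.2))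

lemma Psi_apply (m : ℕ) (p : Equiv.Perm (Fin (2*m+1)) × Fin (2*m+2)) (i : Fin (2*m+3)) :
    Psi m p i = PsiFun m p.1 p.2 i := rfl

lemma Psi_lt (m : ℕ) (p : Equiv.Perm (Fin (2*m+1)) × Fin (2*m+2)) (i : Fin (2*m+3))
    (h : i.val < 2*m+1) : Psi m p i = (eOf m p.2 (p.1 ⟨i.val, h⟩) : Fin (2*m+3)) := by
  rw [Psi_apply, PsiFun, dif_pos h]

lemma Psi_mid (m : ℕ) (p : Equiv.Perm (Fin (2*m+1)) × Fin (2*m+2)) (i : Fin (2*m+3))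
    (h : i.val = 2*m+1) : Psi m p i = ⟨0, by omega⟩ := by
  rw [Psi_apply, PsiFun, dif_neg (by omega), if_pos h]

lemma Psi_last (m : ℕ) (p : Equiv.Perm (Fin (2*m+1)) × Fin (2*m+2)) (i : Fin (2*m+3))
    (h : i.val = 2*m+2) : Psi m p i = vOf m p.2 := by
  rw [Psi_apply, PsiFun, dif_neg (by omega), if_neg (by omega)]

lemma psi_good_iff (m : ℕ) (τ : Equiv.Perm (Fin (2*m+1))) (d : Fin (2*m+2)) :
    Psi m (τ, d) ∈ Good (m+1) ↔ τ ∈ Good m := by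
  simp only [Good, Set.mem_setOf_eq]
  show (DownUp (Psi m (τ, d)) ∧ ∀ i : Fin (2*m+3), Odd i.val → LTRmin (Psi m (τ, d)) i) ↔ _
  constructor
  · rintro ⟨hDU, hLTR⟩
    constructor
    · intro i h
      have hib := i.isLt
      have hP0 : if Even i.val then
          Psi m (τ,d) ⟨i.val+1, by omega⟩ < Psi m (τ,d) ⟨i.val, by omega⟩
          else Psi m (τ,d) ⟨i.val, by omega⟩ < Psi m (τ,d) ⟨i.val+1, by omega⟩ :=
        hDU ⟨i.val, by omega⟩ (show i.val+1 < 2*m+3 by omega)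
      rcases Nat.even_or_odd i.val with hpar | hpar
      · rw [if_pos hpar] at hP0 ⊢
        rw [Psi_lt m (τ,d) ⟨i.val+1, by omega⟩ h,
            Psi_lt m (τ,d) ⟨i.val, by omega⟩ (show i.val < 2*m+1 by omega), eOf_lt_iff] at hP0
        exact hP0
      · rw [if_neg (Nat.not_even_iff_odd.mpr hpar)] at hP0 ⊢
        rw [Psi_lt m (τ,d) ⟨i.val, by omega⟩ (show i.val < 2*m+1 by omega),
            Psi_lt m (τ,d) ⟨i.val+1, by omega⟩ h, eOf_lt_iff] at hP0
        exact hP0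
    · intro i hi j hj
      have hib := i.isLt
      have hjb := j.isLt
      have hij : j.val < i.val := hj
      have hL := hLTR ⟨i.val, by omega⟩ hi ⟨j.val, by omega⟩ (show j.val < i.val from hij)
      rw [Psi_lt m (τ,d) ⟨i.val, by omega⟩ (show i.val < 2*m+1 by omega),
          Psi_lt m (τ,d) ⟨j.val, by omega⟩ (show j.val < 2*m+1 by omega), eOf_lt_iff] at hL
      exact hL
  · rintro ⟨hDU, hLTR⟩
    constructor
    · intro i h
      have hib := i.isLt
      by_cases hc1 : i.val < 2*m
      · have hT := hDU ⟨i.val, by omega⟩ (show i.val+1 < 2*m+1 by omega)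
        rcases Nat.even_or_odd i.val with hpar | hpar
        · rw [if_pos hpar] at hT ⊢
          rw [Psi_lt m (τ,d) ⟨i.val+1, by omega⟩ (show i.val+1 < 2*m+1 by omega),
              Psi_lt m (τ,d) i (by omega), eOf_lt_iff]
          exact hT
        · rw [if_neg (Nat.not_even_iff_odd.mpr hpar)] at hT ⊢
          rw [Psi_lt m (τ,d) i (by omega),
              Psi_lt m (τ,d) ⟨i.val+1, by omega⟩ (show i.val+1 < 2*m+1 by omega), eOf_lt_iff]
          exact hT
      · by_cases hc2 : i.val = 2*m
        · rw [if_pos (show Even i.val from ⟨m, by omega⟩)]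
          rw [Psi_mid m (τ,d) ⟨i.val+1, by omega⟩ (show i.val+1 = 2*m+1 by omega), Psi_lt m (τ,d) i (by omega)]
          exact Fin.lt_def.mpr (eOf_val_pos d _)
        · have hc3 : i.val = 2*m+1 := by omega
          rw [if_neg (Nat.not_even_iff_odd.mpr ⟨m, by omega⟩)]
          rw [Psi_mid m (τ,d) i hc3, Psi_last m (τ,d) ⟨i.val+1, by omega⟩ (show i.val+1 = 2*m+2 by omega)]
          exact Fin.lt_def.mpr (show (0:ℕ) < d.val+1 by omega)
    · intro i hi j hj
      have hib := i.isLt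
      have hjb := j.isLt
      have hij : j.val < i.val := hj
      by_cases hc : i.val < 2*m+1
      · have hL := hLTR ⟨i.val, by omega⟩ hi ⟨j.val, by omega⟩ (show j.val < i.val from hij)
        rw [Psi_lt m (τ,d) i (by omega), Psi_lt m (τ,d) j (by omega), eOf_lt_iff]
        exact hL
      · have hieq : i.val = 2*m+1 := by
          rcases hi with ⟨r, hr⟩
          omega
        rw [Psi_mid m (τ,d) i hieq, Psi_lt m (τ,d) j (by omega)]
        exact Fin.lt_def.mpr (eOf_val_pos d _)

lemma Psi_injective (m : ℕ) : Function.Injective (Psi m) := by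
  rintro ⟨τ, d⟩ ⟨τ', d'⟩ h
  have hd : d = d' := by
    have h1 := DFunLike.congr_fun h (⟨2*m+2, by omega⟩ : Fin (2*m+3))
    rw [Psi_last m (τ,d) _ rfl, Psi_last m (τ',d') _ rfl] at h1
    have h2 := congrArg Fin.val h1
    exact Fin.ext (Nat.succ_injective h2)
  subst hd
  have hτ : τ = τ' := by
    apply Equiv.ext
    intro i
    have h1 := DFunLike.congr_fun h (⟨i.val, by omega⟩ : Fin (2*m+3))
    rw [Psi_lt m (τ,d) ⟨i.val, by omega⟩ i.isLt,
        Psi_lt m (τ',d) ⟨i.val, by omega⟩ i.isLt] at h1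
    exact (eOf m d).injective (Subtype.coe_injective h1)
  rw [hτ]


lemma build_tau (m : ℕ) (σ : Equiv.Perm (Fin (2*m+3))) (d : Fin (2*m+2))
    (hzero : σ ⟨2*m+1, by omega⟩ = ⟨0, by omega⟩)
    (hvd : vOf m d = σ ⟨2*m+2, by omega⟩) :
    ∃ p : Equiv.Perm (Fin (2*m+1)) × Fin (2*m+2), Psi m p = σ := by
  have hmem : ∀ i : Fin (2*m+1), σ ⟨i.val, by omega⟩ ∈ sOf m d := by
    intro i
    rw [mem_sOf]
    constructor
    · intro hh
      have h1 : σ ⟨i.val, by omega⟩ = ⟨0, by omega⟩ := Fin.ext hh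
      have h3 : i.val = 2*m+1 := congrArg Fin.val (σ.injective (h1.trans hzero.symm))
      have := i.isLt
      omega
    · intro hh
      have h3 : i.val = 2*m+2 := congrArg Fin.val (σ.injective (hh.trans hvd))
      have := i.isLt
      omega
  have hg : Function.Injective (fun i : Fin (2*m+1) =>
      (eOf m d).symm ⟨σ ⟨i.val, by omega⟩, hmem i⟩) := by
    intro a b hab
    have h1 := (eOf m d).symm.injective hab
    have h2 := congrArg Subtype.val h1
    have h3 := congrArg Fin.val (σ.injective h2)
    exact Fin.ext h3
  have hbij := (Finite.injective_iff_bijective).mp hg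
  refine ⟨(Equiv.ofBijective _ hbij, d), ?_⟩
  apply Equiv.ext
  intro x
  by_cases hx1 : x.val < 2*m+1
  · rw [Psi_lt m _ x hx1]
    show ((eOf m d) ((eOf m d).symm ⟨σ ⟨x.val, by omega⟩, hmem ⟨x.val, hx1⟩⟩) : Fin (2*m+3)) = σ x
    rw [OrderIso.apply_symm_apply]
  · by_cases hx2 : x.val = 2*m+1
    · rw [Psi_mid m _ x hx2]
      have hxe : x = ⟨2*m+1, by omega⟩ := Fin.ext hx2
      exact hzero.symm.trans (congrArg (⇑σ) hxe.symm)
    · have hx3 : x.val = 2*m+2 := by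
        have := x.isLt
        omega
      rw [Psi_last m _ x hx3]
      have hxe : x = ⟨2*m+2, by omega⟩ := Fin.ext hx3
      exact hvd.trans (congrArg (⇑σ) hxe.symm)

lemma good_psi_surj (m : ℕ) (σ : Equiv.Perm (Fin (2*m+3))) (hσ : σ ∈ Good (m+1)) :
    ∃ p : Equiv.Perm (Fin (2*m+1)) × Fin (2*m+2), Psi m p = σ := by
  obtain ⟨hDU, hLTR⟩ := hσ
  have hDU' : DownUp (n := 2*m+3) σ := hDU
  have hLTR' : ∀ i : Fin (2*m+3), Odd i.val → LTRmin σ i := hLTR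
  have hmin : ∀ j : Fin (2*m+3), j.val ≠ 2*m+1 → σ ⟨2*m+1, by omega⟩ < σ j := by
    intro j hj
    by_cases hlt : j.val < 2*m+1
    · exact hLTR' ⟨2*m+1, by omega⟩ ⟨m, rfl⟩ j (show j.val < 2*m+1 from hlt)
    · have hj2 : j.val = 2*m+2 := by have := j.isLt; omega
      have hD := hDU' ⟨2*m+1, by omega⟩ (show 2*m+2 < 2*m+3 by omega)
      rw [if_neg (Nat.not_even_iff_odd.mpr ⟨m, rfl⟩)] at hD
      have hje : j = ⟨2*m+2, by omega⟩ := Fin.ext hj2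
      rw [hje]
      exact hD
  have hzero : σ ⟨2*m+1, by omega⟩ = ⟨0, by omega⟩ := by
    by_contra hne
    have hσz : σ (σ.symm ⟨0, by omega⟩) = ⟨0, by omega⟩ := σ.apply_symm_apply _
    have hzne : (σ.symm ⟨0, by omega⟩).val ≠ 2*m+1 := by
      intro hh
      apply hne
      have hz : σ.symm ⟨0, by omega⟩ = ⟨2*m+1, by omega⟩ := Fin.ext hh
      rw [← hz, hσz]
    have hlt := hmin _ hzne
    rw [hσz] at hlt
    exact absurd hlt (Nat.not_lt_zero _)
  have hvne : (σ ⟨2*m+2, by omega⟩).val ≠ 0 := by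
    intro hh
    have h1 : σ ⟨2*m+2, by omega⟩ = σ ⟨2*m+1, by omega⟩ := by
      rw [hzero]
      exact Fin.ext hh
    have h3 : (2*m+2 : ℕ) = 2*m+1 := congrArg Fin.val (σ.injective h1)
    omega
  have hvlt := (σ ⟨2*m+2, by omega⟩).isLt
  exact build_tau m σ ⟨(σ ⟨2*m+2, by omega⟩).val - 1, by omega⟩ hzero
    (Fin.ext (show (σ ⟨2*m+2, by omega⟩).val - 1 + 1 = (σ ⟨2*m+2, by omega⟩).val by omega))

lemma good_card (m : ℕ) : (Good m).ncard = evenDF m := by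
  induction m with
  | zero => exact good_zero
  | succ k ih =>
    have himg : Good (k+1) = Psi k '' ((Good k) ×ˢ (Set.univ : Set (Fin (2*k+2)))) := by
      ext σ
      constructor
      · intro hσ
        obtain ⟨p, hp⟩ := good_psi_surj k σ hσ
        refine ⟨p, ⟨?_, trivial⟩, hp⟩
        exact (psi_good_iff k p.1 p.2).mp (by rw [show (p.1, p.2) = p from rfl, hp]; exact hσ)
      · rintro ⟨⟨τ, d⟩, ⟨hτ, _⟩, rfl⟩
        exact (psi_good_iff k τ d).mpr hτ
    rw [himg, Set.ncard_image_of_injOn ((Psi_injective k).injOn)]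
    have hprod : ((Good k) ×ˢ (Set.univ : Set (Fin (2*k+2)))).ncard
        = (Good k).ncard * (2*k+2) := by
      rw [← Nat.card_coe_set_eq, Nat.card_congr (Equiv.Set.prod _ _), Nat.card_prod,
        Nat.card_coe_set_eq, Nat.card_coe_set_eq, Set.ncard_univ,
        Nat.card_eq_fintype_card, Fintype.card_fin]
    rw [hprod, ih]
    show evenDF k * (2*k+2) = evenDF (k+1)
    rw [evenDF, evenDF, Finset.prod_range_succ]

theorem stmt15 (n : ℕ) (hn : 1 ≤ n) :
    (∀ σ : Equiv.Perm (Fin (2*n+1)), DownUp σ → dbarStat n σ ≤ n+1) ∧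
    {σ : Equiv.Perm (Fin (2*n+1)) | DownUp σ ∧ dbarStat n σ = n+1}.ncard = evenDF n := by
  refine ⟨fun σ h => dbar_le σ h, ?_⟩
  have hset : {σ : Equiv.Perm (Fin (2*n+1)) | DownUp σ ∧ dbarStat n σ = n+1} = Good n := by
    ext σ
    simp only [Set.mem_setOf_eq, Good]
    constructor
    · rintro ⟨h1, h2⟩
      exact ⟨h1, (dbar_eq_iff σ h1).mp h2⟩
    · rintro ⟨h1, h2⟩
      exact ⟨h1, (dbar_eq_iff σ h1).mpr h2⟩
  rw [hset, good_card]
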